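/- Let G be a countable group and N a normal subgroup of G. If there exists a topologically free boundary action G ↷ X on a compact Hausdorff space such that N fixes a probability measure on X, then N = {e}. In particular, no non-trivial normal subgroup of G is weakly parabolic. -/

import Mathlib

open scoped Classical ENNReal
open Topology Filter

noncomputable section

namespace QR

/-- An action is minimal if every orbit is dense. -/
def IsMinimalAction (G X : Type*) [Group G] [TopologicalSpace X] [MulAction G X] : Prop :=
  ∀ x : X, Dense (MulAction.orbit G x)

/-- An action is topologically free if the fixed-point set of every nontrivial group element
has empty interior. -/
def IsTopFreeAction (G X : Type*) [Group G] [TopologicalSpace X] [MulAction G X] : Prop :=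
  ∀ g : G, g ≠ 1 → interior {x : X | g • x = x} = ∅

/-- The point mass at `x`, as a probability measure. -/
def diracProb {X : Type*} [MeasurableSpace X] (x : X) : MeasureTheory.ProbabilityMeasure X :=
  ⟨MeasureTheory.Measure.dirac x, inferInstance⟩

/-- An action on a compact space is strongly proximal if the weak* closure of every `G`-orbit
in `Prob(X)` contains a point mass. -/
def IsStronglyProximal (G X : Type*) [Group G] [TopologicalSpace X] [MeasurableSpace X]
    [OpensMeasurableSpace X] [MulAction G X] : Prop :=
  ∀ μ : MeasureTheory.ProbabilityMeasure X, ∃ x : X,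
    diracProb x ∈ closure {ν : MeasureTheory.ProbabilityMeasure X |
      ∃ g : G, (ν : MeasureTheory.Measure X) =
        MeasureTheory.Measure.map (fun y : X => g • y) (μ : MeasureTheory.Measure X)}

/-- If `N` is a normal subgroup of a countable group `G` and there exists a
topologically free boundary action `G ↷ X` (compact Hausdorff, minimal, strongly proximal)
admitting an `N`-invariant probability measure, then `N` is trivial. In particular, no
non-trivial normal subgroup of `G` is weakly parabolic. -/
theorem normal_weakly_parabolic_is_trivial (G : Type*) [Group G] [Countable G]
    (N : Subgroup G) (hNnormal : N.Normal)
    (X : Type*) [TopologicalSpace X] [CompactSpace X] [T2Space X]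
    [MeasurableSpace X] [BorelSpace X] [MulAction G X]
    (hc : ∀ g : G, Continuous fun x : X => g • x)
    (hmin : IsMinimalAction G X) (hsp : IsStronglyProximal G X)
    (htf : IsTopFreeAction G X)
    (μ : MeasureTheory.ProbabilityMeasure X)
    (hinv : ∀ n : G, n ∈ N →
      MeasureTheory.Measure.map (fun x : X => n • x) (μ : MeasureTheory.Measure X) =
        (μ : MeasureTheory.Measure X)) :
    N = ⊥ := by
  have hX : Nonempty X := μ.nonempty
  -- measurability of the action maps
  have hm : ∀ g : G, Measurable fun x : X => g • x := fun g => (hc g).measurable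
  obtain ⟨x, hx⟩ := hsp μ
  -- Step 1: every n ∈ N fixes x
  have hfix : ∀ n ∈ N, n • x = x := by
    intro n hn
    set F : MeasureTheory.ProbabilityMeasure X → MeasureTheory.ProbabilityMeasure X :=
      fun ν => ν.map (hc n).measurable.aemeasurable with hF
    set C : Set (MeasureTheory.ProbabilityMeasure X) :=
      {ν | ∀ f : BoundedContinuousFunction X NNReal,
        (F ν).toWeakDualBCNN f = ν.toWeakDualBCNN f} with hC
    have hCclosed : IsClosed C := by
      have : C = ⋂ f : BoundedContinuousFunction X NNReal,
          {ν | (F ν).toWeakDualBCNN f = ν.toWeakDualBCNN f} := by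
        ext ν; simp [hC, Set.mem_iInter]
      rw [this]
      refine isClosed_iInter fun f => isClosed_eq ?_ ?_
      · exact (WeakDual.eval_continuous f).comp
          (MeasureTheory.ProbabilityMeasure.toWeakDualBCNN_continuous.comp
            (MeasureTheory.ProbabilityMeasure.continuous_map (hc n)))
      · exact (WeakDual.eval_continuous f).comp
          MeasureTheory.ProbabilityMeasure.toWeakDualBCNN_continuous
    have hSsub : {ν : MeasureTheory.ProbabilityMeasure X |
        ∃ g : G, (ν : MeasureTheory.Measure X) =
          MeasureTheory.Measure.map (fun y : X => g • y)
            (μ : MeasureTheory.Measure X)} ⊆ C := by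
      rintro ν ⟨g, hg⟩
      have hFν : ((F ν : MeasureTheory.ProbabilityMeasure X) : MeasureTheory.Measure X) =
          (ν : MeasureTheory.Measure X) := by
        have h1 : ((F ν : MeasureTheory.ProbabilityMeasure X) : MeasureTheory.Measure X) =
            MeasureTheory.Measure.map (fun y : X => n • y) (ν : MeasureTheory.Measure X) := rfl
        rw [h1, hg, MeasureTheory.Measure.map_map (hm n) (hm g)]
        have hconj : g⁻¹ * n * g ∈ N := hNnormal.conj_mem' n hn g
        have h2 : ((fun y : X => n • y) ∘ fun y : X => g • y)
            = (fun y : X => g • y) ∘ (fun y : X => (g⁻¹ * n * g) • y) := by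
          funext y
          simp only [Function.comp_apply, ← mul_smul]
          congr 1
          group
        rw [h2, ← MeasureTheory.Measure.map_map (hm g) (hm (g⁻¹ * n * g)),
          hinv _ hconj]
      intro f
      have : F ν = ν := MeasureTheory.ProbabilityMeasure.toMeasure_injective hFν
      rw [this]
    have hxC : diracProb x ∈ C := by
      have := closure_minimal hSsub hCclosed
      exact this hx
    -- evaluate against bounded continuous functions
    have heval : ∀ f : BoundedContinuousFunction X NNReal, f (n • x) = f x := by
      intro f
      have h := hxC f
      have hmapdirac : ((F (diracProb x) : MeasureTheory.ProbabilityMeasure X) :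
          MeasureTheory.Measure X) = MeasureTheory.Measure.dirac (n • x) := by
        have h1 : ((F (diracProb x) : MeasureTheory.ProbabilityMeasure X) :
            MeasureTheory.Measure X) =
            MeasureTheory.Measure.map (fun y : X => n • y)
              (MeasureTheory.Measure.dirac x) := rfl
        rw [h1, MeasureTheory.Measure.map_dirac' (hm n)]
      have hfmeas : Measurable fun y : X => (f y : ENNReal) :=
        (ENNReal.continuous_coe.comp f.continuous).measurable
      rw [MeasureTheory.ProbabilityMeasure.toWeakDualBCNN_apply,
        MeasureTheory.ProbabilityMeasure.toWeakDualBCNN_apply, hmapdirac] at h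
      have hd1 : (∫⁻ ω, (f ω : ENNReal) ∂(MeasureTheory.Measure.dirac (n • x)))
          = (f (n • x) : ENNReal) := MeasureTheory.lintegral_dirac' _ hfmeas
      have hd2 : (∫⁻ ω, (f ω : ENNReal) ∂((diracProb x : MeasureTheory.ProbabilityMeasure X) :
          MeasureTheory.Measure X)) = (f x : ENNReal) := by
        have : ((diracProb x : MeasureTheory.ProbabilityMeasure X) :
            MeasureTheory.Measure X) = MeasureTheory.Measure.dirac x := rfl
        rw [this]
        exact MeasureTheory.lintegral_dirac' _ hfmeas
      rw [hd1, hd2] at h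
      simpa using h
    by_contra hne
    -- separate points by a bounded continuous NNReal function
    obtain ⟨f, hf0, hf1, hf01⟩ := exists_continuous_zero_one_of_isClosed
      (isClosed_singleton (x := x)) (isClosed_singleton (x := n • x))
      (by simpa [Set.disjoint_singleton] using fun h => hne h.symm)
    set f' : BoundedContinuousFunction X NNReal :=
      BoundedContinuousFunction.mkOfCompact
        ⟨fun y => Real.toNNReal (f y), continuous_real_toNNReal.comp f.continuous⟩ with hf'
    have h1 : f' (n • x) = 1 := by
      simp [hf', hf1 (Set.mem_singleton _)]
    have h0 : f' x = 0 := by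
      simp [hf', hf0 (Set.mem_singleton _)]
    have := heval f'
    rw [h1, h0] at this
    exact one_ne_zero this
  -- Step 2: the common fixed set of N is closed, G-invariant, contains x, hence all of X
  set FixN : Set X := {y | ∀ n ∈ N, n • y = y} with hFixN
  have hclosed : IsClosed FixN := by
    have : FixN = ⋂ (n : G) (_ : n ∈ N), {y : X | n • y = y} := by
      ext y; simp [hFixN]
    rw [this]
    exact isClosed_iInter fun n => isClosed_iInter fun _ =>
      isClosed_eq (hc n) continuous_id
  have horb : MulAction.orbit G x ⊆ FixN := by
    rintro _ ⟨g, rfl⟩ n hn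
    have hconj : g⁻¹ * n * g ∈ N := hNnormal.conj_mem' n hn g
    have := hfix _ hconj
    calc n • g • x = g • (g⁻¹ * n * g) • x := by
          simp only [← mul_smul]; congr 1; group
      _ = g • x := by rw [this]
  have hFixNuniv : FixN = Set.univ := by
    apply Set.eq_univ_of_univ_subset
    have hdense : Dense (MulAction.orbit G x) := hmin x
    calc Set.univ = closure (MulAction.orbit G x) := (hdense.closure_eq).symm
      _ ⊆ closure FixN := closure_mono horb
      _ = FixN := hclosed.closure_eq
  -- Step 3: conclude N = ⊥ by topological freeness
  rw [Subgroup.eq_bot_iff_forall]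
  intro n hn
  by_contra hne
  have h1 : {y : X | n • y = y} = Set.univ := by
    apply Set.eq_univ_of_univ_subset
    intro y _
    have : y ∈ FixN := hFixNuniv ▸ Set.mem_univ y
    exact this n hn
  have h2 := htf n hne
  rw [h1, interior_univ] at h2
  exact (Set.univ_nonempty).ne_empty h2

end QR
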